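/- Let m, d > 0 with d ≤ m and let π : ℕ → ℝ>0 be a probability distribution satisfying, for all k ≥ 0, the cut balance equation m·π(k) = (k+1)π(k+1) + (k+2)(1 - (1-d/m)^{k+1})π(k+2). Let k* ∈ (m/2 - 2, m - 1) be the root of g(x) = m - (x+1) - (x+2)(1-(1-d/m)^{x+1}). Then for every integer k ≤ k*, π(k)/max{π(k+1), π(k+2)} ≤ e^{-(k*-k)/m}, and for every integer k ≥ k*, min{π(k+1), π(k+2)}/π(k) ≤ e^{-(k-k*)/(m + k - k*)}. -/

import Mathlib

/-- Drift of the stationary distribution of the Patient pool-size chain: if `p` is a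
positive probability distribution satisfying the cut balance equation
`m·p(k) = (k+1)p(k+1) + (k+2)(1-(1-d/m)^{k+1})p(k+2)`, and
`k* ∈ (m/2-2, m-1)` is a root of `g(x) = m-(x+1)-(x+2)(1-(1-d/m)^{x+1})`, then
`p(k)/max(p(k+1),p(k+2)) ≤ e^{-(k*-k)/m}` for `k ≤ k*`, and
`min(p(k+1),p(k+2))/p(k) ≤ e^{-(k-k*)/(m+k-k*)}` for `k ≥ k*`. -/
theorem patient_stationary_ratio (m d : ℝ) (hd : 0 < d) (hdm : d ≤ m)
    (p : ℕ → ℝ) (hp : ∀ k, 0 < p k) (hsum : ∑' k : ℕ, p k = 1)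
    (hbal : ∀ k : ℕ,
      m * p k = ((k : ℝ) + 1) * p (k + 1) +
        ((k : ℝ) + 2) * (1 - (1 - d / m) ^ (k + 1)) * p (k + 2))
    (kstar : ℝ) (hk1 : m / 2 - 2 < kstar) (hk2 : kstar < m - 1)
    (hroot : m - (kstar + 1) - (kstar + 2) * (1 - (1 - d / m) ^ (kstar + 1)) = 0) :
    (∀ k : ℕ, (k : ℝ) ≤ kstar →
      p k / max (p (k + 1)) (p (k + 2)) ≤ Real.exp (-(kstar - (k : ℝ)) / m)) ∧
    (∀ k : ℕ, kstar ≤ (k : ℝ) →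
      min (p (k + 1)) (p (k + 2)) / p k ≤
        Real.exp (-((k : ℝ) - kstar) / (m + (k : ℝ) - kstar))) := by
  have hm : 0 < m := lt_of_lt_of_le hd hdm
  set q : ℝ := 1 - d / m with hq
  have hdm1 : d / m ≤ 1 := (div_le_one hm).mpr hdm
  have hdm0 : 0 < d / m := div_pos hd hm
  have hq0 : 0 ≤ q := by rw [hq]; linarith
  have hq1 : q ≤ 1 := by rw [hq]; linarith
  have hpow1 : ∀ k : ℕ, q ^ (k + 1) ≤ 1 := fun k => pow_le_one₀ hq0 hq1
  have hcast : ∀ k : ℕ, q ^ ((k : ℝ) + 1) = q ^ (k + 1) := by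
    intro k
    rw [show ((k : ℝ) + 1) = ((k + 1 : ℕ) : ℝ) by push_cast; ring, Real.rpow_natCast]
  constructor
  · intro k hk
    have hk0 : (0 : ℝ) ≤ kstar := le_trans (Nat.cast_nonneg k) hk
    -- monotone-drift bound: f(k) ≤ f(k*) - (k*-k) = m - (k*-k)
    have hA : ((k : ℝ) + 2) * (1 - q ^ (k + 1)) ≤ (kstar + 2) * (1 - q ^ (kstar + 1)) := by
      rcases eq_or_lt_of_le hq0 with h0 | h0
      · have e1 : q ^ (k + 1) = (0 : ℝ) := by rw [← h0]; simp
        have e2 : q ^ (kstar + 1) = (0 : ℝ) := by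
          rw [← h0]; exact Real.zero_rpow (by positivity)
        rw [e1, e2]; linarith
      · have hmono : q ^ (kstar + 1) ≤ q ^ ((k : ℝ) + 1) :=
          Real.rpow_le_rpow_of_exponent_ge h0 hq1 (by linarith)
        rw [hcast k] at hmono
        exact mul_le_mul (by linarith) (by linarith) (by linarith [hpow1 k]) (by linarith)
    have hb := hbal k
    set M : ℝ := max (p (k + 1)) (p (k + 2)) with hMdef
    have hM : 0 < M := lt_max_of_lt_left (hp (k + 1))
    have hM1 : p (k + 1) ≤ M := le_max_left _ _
    have hM2 : p (k + 2) ≤ M := le_max_right _ _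
    have hc0 : 0 ≤ ((k : ℝ) + 2) * (1 - q ^ (k + 1)) :=
      mul_nonneg (by positivity) (by linarith [hpow1 k])
    have t1 : ((k : ℝ) + 1) * p (k + 1) ≤ ((k : ℝ) + 1) * M :=
      mul_le_mul_of_nonneg_left hM1 (by positivity)
    have t2 : ((k : ℝ) + 2) * (1 - q ^ (k + 1)) * p (k + 2) ≤
        ((k : ℝ) + 2) * (1 - q ^ (k + 1)) * M :=
      mul_le_mul_of_nonneg_left hM2 hc0
    have step1 : m * p k ≤ (((k : ℝ) + 1) + ((k : ℝ) + 2) * (1 - q ^ (k + 1))) * M := by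
      rw [hb]
      calc ((k : ℝ) + 1) * p (k + 1) + ((k : ℝ) + 2) * (1 - q ^ (k + 1)) * p (k + 2)
          ≤ ((k : ℝ) + 1) * M + ((k : ℝ) + 2) * (1 - q ^ (k + 1)) * M := add_le_add t1 t2
        _ = (((k : ℝ) + 1) + ((k : ℝ) + 2) * (1 - q ^ (k + 1))) * M := by ring
    have hfk : (((k : ℝ) + 1) + ((k : ℝ) + 2) * (1 - q ^ (k + 1))) ≤ m - (kstar - (k : ℝ)) := by
      linarith [hA, hroot]
    have step2 : m * p k ≤ (m - (kstar - (k : ℝ))) * M :=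
      le_trans step1 (mul_le_mul_of_nonneg_right hfk hM.le)
    have key : p k / M ≤ 1 - (kstar - (k : ℝ)) / m := by
      rw [div_le_iff₀ hM]
      have e : (1 - (kstar - (k : ℝ)) / m) * M = ((m - (kstar - (k : ℝ))) * M) / m := by
        field_simp
      rw [e, le_div_iff₀ hm]
      linarith [step2, mul_comm (p k) m]
    have hexp := Real.add_one_le_exp (-(kstar - (k : ℝ)) / m)
    have hnd : -(kstar - (k : ℝ)) / m = -((kstar - (k : ℝ)) / m) := neg_div _ _
    linarith [key, hexp, hnd]
  · intro k hk
    have hks2 : (0 : ℝ) ≤ kstar + 2 := by linarith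
    have hB : (kstar + 2) * (1 - q ^ (kstar + 1)) ≤ ((k : ℝ) + 2) * (1 - q ^ (k + 1)) := by
      rcases le_or_gt (q ^ (kstar + 1)) 1 with h | h
      · have hmono : q ^ ((k : ℝ) + 1) ≤ q ^ (kstar + 1) := by
          rcases eq_or_lt_of_le hq0 with h0 | h0
          · rw [← h0, Real.zero_rpow (by positivity : ((k : ℝ) + 1) ≠ 0)]
            exact Real.rpow_nonneg le_rfl _
          · exact Real.rpow_le_rpow_of_exponent_ge h0 hq1 (by linarith)
        rw [hcast k] at hmono
        exact mul_le_mul (by linarith) (by linarith) (by linarith) (by positivity)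
      · have l1 : (kstar + 2) * (1 - q ^ (kstar + 1)) ≤ 0 :=
          mul_nonpos_of_nonneg_of_nonpos hks2 (by linarith)
        have l2 : 0 ≤ ((k : ℝ) + 2) * (1 - q ^ (k + 1)) :=
          mul_nonneg (by positivity) (by linarith [hpow1 k])
        linarith
    have hb := hbal k
    set u : ℝ := min (p (k + 1)) (p (k + 2)) with hudef
    have hu : 0 < u := lt_min (hp (k + 1)) (hp (k + 2))
    have hu1 : u ≤ p (k + 1) := min_le_left _ _
    have hu2 : u ≤ p (k + 2) := min_le_right _ _
    have hc0 : 0 ≤ ((k : ℝ) + 2) * (1 - q ^ (k + 1)) :=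
      mul_nonneg (by positivity) (by linarith [hpow1 k])
    have t1 : ((k : ℝ) + 1) * u ≤ ((k : ℝ) + 1) * p (k + 1) :=
      mul_le_mul_of_nonneg_left hu1 (by positivity)
    have t2 : ((k : ℝ) + 2) * (1 - q ^ (k + 1)) * u ≤
        ((k : ℝ) + 2) * (1 - q ^ (k + 1)) * p (k + 2) :=
      mul_le_mul_of_nonneg_left hu2 hc0
    have step1 : (((k : ℝ) + 1) + ((k : ℝ) + 2) * (1 - q ^ (k + 1))) * u ≤ m * p k := by
      rw [hb]
      calc (((k : ℝ) + 1) + ((k : ℝ) + 2) * (1 - q ^ (k + 1))) * u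
          = ((k : ℝ) + 1) * u + ((k : ℝ) + 2) * (1 - q ^ (k + 1)) * u := by ring
        _ ≤ ((k : ℝ) + 1) * p (k + 1) + ((k : ℝ) + 2) * (1 - q ^ (k + 1)) * p (k + 2) :=
            add_le_add t1 t2
    have hfk : m + (k : ℝ) - kstar ≤ (((k : ℝ) + 1) + ((k : ℝ) + 2) * (1 - q ^ (k + 1))) := by
      linarith [hB, hroot]
    have hms : 0 < m + (k : ℝ) - kstar := by linarith
    have step2 : (m + (k : ℝ) - kstar) * u ≤ m * p k :=
      le_trans (mul_le_mul_of_nonneg_right hfk hu.le) step1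
    have key : u / p k ≤ 1 - ((k : ℝ) - kstar) / (m + (k : ℝ) - kstar) := by
      rw [div_le_iff₀ (hp k)]
      have e : (1 - ((k : ℝ) - kstar) / (m + (k : ℝ) - kstar)) * p k =
          (m * p k) / (m + (k : ℝ) - kstar) := by
        field_simp
        ring
      rw [e, le_div_iff₀ hms]
      linarith [step2, mul_comm u (m + (k : ℝ) - kstar)]
    have hexp := Real.add_one_le_exp (-((k : ℝ) - kstar) / (m + (k : ℝ) - kstar))
    have hnd : -((k : ℝ) - kstar) / (m + (k : ℝ) - kstar) =
        -(((k : ℝ) - kstar) / (m + (k : ℝ) - kstar)) := neg_div _ _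
    linarith [key, hexp, hnd]
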